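/- For a rational number p/q with p odd, q even, 0 < q < p, gcd(p,q) = 1: if in the division algorithm step p = cq + r with 0 ≤ r < q, then exactly one of c and c+1 is even, and choosing the even one gives a remainder r' with |r'| < q and p/q = (even integer) + r'/q where r'/q has odd numerator or terminates; consequently the greedy even-expansion algorithm terminates. -/
import Mathlib


/-- Value of a continued fraction `[a₁, …, aₙ] = a₁ + 1/(a₂ + 1/(⋯ + 1/aₙ))`,
evaluated in `ℚ` (with the convention `cfVal [] = 0`, so `cfVal [a] = a`). -/
def cfVal : List ℤ → ℚ
  | [] => 0
  | a :: l => a + (cfVal l)⁻¹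

lemma cfVal_cons (a : ℤ) (l : List ℤ) : cfVal (a :: l) = a + (cfVal l)⁻¹ := rfl

lemma even_exp_aux : ∀ k : ℕ, ∀ n d : ℤ, d.natAbs ≤ k → 0 < d → d < |n| →
    IsCoprime n d → Odd (n + d) →
    ∃ l : List ℤ, (∀ a ∈ l, a ≠ 0 ∧ Even a) ∧ cfVal l = (n : ℚ) / d := by
  intro k
  induction k with
  | zero =>
    intro n d hk hd _ _ _
    exfalso; omega
  | succ k ih =>
    intro n d hk hd hlt hco hodd
    obtain ⟨c, r, hnd, hr0, hr1⟩ :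
        ∃ c r : ℤ, n = d * c + r ∧ 0 ≤ r ∧ r < d :=
      ⟨n / d, n % d, (Int.mul_ediv_add_emod n d).symm, Int.emod_nonneg n (by omega),
        Int.emod_lt_of_pos n hd⟩
    have hd1 : d ∣ n → d = 1 := by
      intro hdvd
      have hu : IsUnit d := hco.isUnit_of_dvd' hdvd dvd_rfl
      rcases Int.isUnit_iff.mp hu with h | h <;> omega
    -- choose even quotient c' and odd-signed remainder r'
    obtain ⟨c', r', hc'even, hr'def, hcase⟩ :
        ∃ c' r' : ℤ, Even c' ∧ n = c' * d + r' ∧ (r' = r ∨ r' = r - d) := by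
      rcases Int.even_or_odd c with he | ho
      · exact ⟨c, r, he, by rw [hnd]; ring, Or.inl rfl⟩
      · refine ⟨c + 1, r - d, ?_, by rw [hnd]; ring, Or.inr rfl⟩
        rcases ho with ⟨m, hm⟩
        exact ⟨m + 1, by omega⟩
    have hco' : IsCoprime d r' := by
      have h := hco.symm.add_mul_left_right (-c')
      have h2 : n + d * (-c') = r' := by
        have : n = c' * d + r' := hr'def
        nlinarith [this]
      rwa [h2] at h
    have hoddsum : Odd (d + r') := by
      rcases hc'even with ⟨m, hm⟩
      rcases hodd with ⟨t, ht⟩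
      refine ⟨t - m * d, ?_⟩
      have h1 : c' * d = 2 * (m * d) := by rw [hm]; ring
      omega
    by_cases hr'0 : r' = 0
    · -- terminal case: d = 1, n = c'
      have hdvd : d ∣ n := ⟨c', by rw [hr'def, hr'0]; ring⟩
      have hd1' : d = 1 := hd1 hdvd
      have hnc : n = c' := by
        have h1 : c' * d = c' := by rw [hd1']; ring
        omega
      refine ⟨[c'], ?_, ?_⟩
      · intro a ha
        simp only [List.mem_singleton] at ha
        subst ha
        refine ⟨?_, hc'even⟩
        intro h
        rw [← hnc] at h
        rw [h] at hlt
        simp at hlt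
        omega
      · simp [cfVal, hd1', hnc]
    · -- recursive case
      have hr'lt : |r'| < d := by
        rcases hcase with he | he
        · rw [he, abs_of_nonneg hr0]; omega
        · rw [he]
          by_cases hrz : r = 0
          · exfalso
            have hdvd : d ∣ n := ⟨c, by omega⟩
            have hde := hd1 hdvd
            rcases hoddsum with ⟨t2, ht2⟩
            omega
          · rw [abs_of_neg (by omega)]; omega
      have hc'ne : c' ≠ 0 := by
        intro h
        rw [h] at hr'def
        simp at hr'def
        rw [← hr'def] at hr'lt
        omega
      have habs : r'.natAbs ≤ k := by
        have h1 : |r'| = (r'.natAbs : ℤ) := Int.abs_eq_natAbs r'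
        omega
      have key : ∃ l : List ℤ, (∀ a ∈ l, a ≠ 0 ∧ Even a) ∧ cfVal l = (d : ℚ) / r' := by
        rcases lt_or_gt_of_ne hr'0 with hneg | hpos
        · obtain ⟨l, hl1, hl2⟩ := ih (-d) (-r') (by omega) (by omega)
            (by
              rw [abs_neg, abs_of_pos hd]
              have := neg_le_abs r'
              omega)
            hco'.neg_neg
            (by rcases hoddsum with ⟨t, ht⟩; exact ⟨-t - 1, by omega⟩)
          refine ⟨l, hl1, ?_⟩
          rw [hl2]
          push_cast
          rw [neg_div_neg_eq]
        · obtain ⟨l, hl1, hl2⟩ := ih d r' (by omega) hpos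
            (by
              rw [abs_of_pos hd]
              have := le_abs_self r'
              omega)
            hco' hoddsum
          exact ⟨l, hl1, hl2⟩
      obtain ⟨l, hl1, hl2⟩ := key
      refine ⟨c' :: l, ?_, ?_⟩
      · intro a ha
        rcases List.mem_cons.mp ha with h | h
        · exact h ▸ ⟨hc'ne, hc'even⟩
        · exact hl1 a h
      · rw [cfVal_cons, hl2, inv_div]
        have hdQ : (d : ℚ) ≠ 0 := Int.cast_ne_zero.mpr (by omega)
        have hnn : (n : ℚ) = c' * d + r' := by exact_mod_cast congrArg (Int.cast : ℤ → ℚ) hr'def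
        field_simp
        rw [hnn]

/-- One step of the greedy even expansion: exactly one of the quotients c, c+1 is even,
the even choice gives an odd remainder r' with |r'| < q, and consequently the greedy
even-expansion algorithm terminates, producing a finite even expansion of p/q. -/
theorem even_expansion_step_and_termination (p q c r : ℤ)
    (hp : Odd p) (hq : Even q) (h0 : 0 < q) (h1 : q < p) (hco : IsCoprime p q)
    (hdiv : p = c * q + r) (hr0 : 0 ≤ r) (hr1 : r < q) :
    Xor' (Even c) (Even (c + 1)) ∧
    (∃ c' r' : ℤ, Even c' ∧ (c' = c ∨ c' = c + 1) ∧ p = c' * q + r' ∧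
      |r'| < q ∧ Odd r') ∧
    (∃ l : List ℤ, (∀ a ∈ l, a ≠ 0 ∧ Even a) ∧ cfVal l = (p : ℚ) / q) := by
  obtain ⟨t, ht⟩ := hp
  obtain ⟨s, hs⟩ := hq
  have hcq : c * q = 2 * (c * s) := by rw [hs]; ring
  refine ⟨?_, ?_, ?_⟩
  · rcases Int.even_or_odd c with ⟨m, hm⟩ | ⟨m, hm⟩
    · exact Or.inl ⟨⟨m, hm⟩, by rintro ⟨m', hm'⟩; omega⟩
    · exact Or.inr ⟨⟨m + 1, by omega⟩, by rintro ⟨m', hm'⟩; omega⟩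
  · have hrodd : Odd r := ⟨t - c * s, by omega⟩
    have hrpos : 0 < r := by rcases hrodd with ⟨u, hu⟩; omega
    rcases Int.even_or_odd c with ⟨m, hm⟩ | ⟨m, hm⟩
    · exact ⟨c, r, ⟨m, hm⟩, Or.inl rfl, hdiv, by rw [abs_of_nonneg hr0]; omega, hrodd⟩
    · refine ⟨c + 1, r - q, ⟨m + 1, by omega⟩, Or.inr rfl, ?_, ?_, ?_⟩
      · have h3 : (c + 1) * q = c * q + q := by ring
        omega
      · rw [abs_of_neg (by omega)]; omega
      · exact ⟨t - c * s - s, by omega⟩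
  · exact even_exp_aux q.natAbs p q le_rfl h0
      (by rw [abs_of_pos (by omega)]; omega) hco ⟨t + s, by omega⟩
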